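/- Let $A$, $B$, $P$ be vector spaces over a field $F$ and let $\rho \colon A \to B \otimes P^*$ be a linear map, written $\rho(a) = a_{(0)} \otimes a_{(1)}$. Define $\psi \colon P \otimes A \to B$ by $\psi(p \otimes a) = a_{(1)}(p)\,a_{(0)}$. Then $\cosupp\rho$ equals the closure of $\cosupp\psi$ in the finite topology on $\mathrm{Hom}_F(A,B)$, where $\cosupp\psi = \{\psi(p\otimes -) \mid p \in P\}$ and $\cosupp\rho = \{(\mathrm{id}_B\otimes q^{**})\circ\rho \mid q^{**} \in P^{**}\}$. -/

import Mathlib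

open TensorProduct

variable {F : Type*} [Field F] {A : Type uA} {B : Type uB} [AddCommGroup A] [Module F A]
  [AddCommGroup B] [Module F B]

/-- The linear map `Q^* → Hom(A,B)` sending `q^*` to `(id_B ⊗ q^*) ∘ ρ`. -/
noncomputable def cosuppL {Q : Type*} [AddCommGroup Q] [Module F Q] (ρ : A →ₗ[F] B ⊗[F] Q) :
    Module.Dual F Q →ₗ[F] (A →ₗ[F] B) where
  toFun q := (TensorProduct.rid F B).toLinearMap ∘ₗ LinearMap.lTensor B q ∘ₗ ρ
  map_add' q₁ q₂ := by
    simp [LinearMap.lTensor_add, LinearMap.add_comp, LinearMap.comp_add]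
  map_smul' c q := by
    simp [LinearMap.lTensor_smul, LinearMap.smul_comp, LinearMap.comp_smul]

/-- The cosupport of `ρ : A → B ⊗ Q`. -/
noncomputable def lcosupp {Q : Type*} [AddCommGroup Q] [Module F Q] (ρ : A →ₗ[F] B ⊗[F] Q) :
    Submodule F (A →ₗ[F] B) :=
  LinearMap.range (cosuppL ρ)

/-- The finite topology on `Hom_F(A,B)`: pointwise convergence with `B` discrete. -/
def finiteTopology (F A B : Type*) [Field F] [AddCommGroup A] [Module F A]
    [AddCommGroup B] [Module F B] : TopologicalSpace (A →ₗ[F] B) :=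
  TopologicalSpace.induced (fun f : A →ₗ[F] B => (f : A → B))
    (@Pi.topologicalSpace A (fun _ => B) (fun _ => ⊥))


open Topology in
-- closure characterization
lemma mem_closure_finiteTopology {S : Set (A →ₗ[F] B)} {f : A →ₗ[F] B} :
    f ∈ @closure _ (finiteTopology F A B) S ↔
      ∀ s : Finset A, ∃ g ∈ S, ∀ a ∈ s, g a = f a := by
  letI : TopologicalSpace B := ⊥
  haveI : DiscreteTopology B := ⟨rfl⟩
  letI : TopologicalSpace (A →ₗ[F] B) := finiteTopology F A B
  have hft : finiteTopology F A B =
      TopologicalSpace.induced (fun g : A →ₗ[F] B => (g : A → B)) inferInstance := rfl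
  have hnhds : 𝓝 f = Filter.comap (fun g : A →ₗ[F] B => (g : A → B))
      (Filter.pi fun a : A => pure (f a)) := by
    conv_lhs => rw [show (𝓝 f : Filter (A →ₗ[F] B)) = @nhds _ (TopologicalSpace.induced (fun g : A →ₗ[F] B => (g : A → B)) inferInstance) f from rfl, nhds_induced (fun g : A →ₗ[F] B => (g : A → B))]
    rw [nhds_pi]
    simp [nhds_discrete]
  rw [mem_closure_iff_nhds, hnhds]
  constructor
  · intro H s
    have hU : ((fun g : A →ₗ[F] B => (g : A → B)) ⁻¹'
        {x : A → B | ∀ a ∈ s, x a = f a}) ∈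
        Filter.comap (fun g : A →ₗ[F] B => (g : A → B))
          (Filter.pi fun a : A => pure (f a)) := by
      refine Filter.preimage_mem_comap ?_
      have : ((s : Set A).pi fun a => ({f a} : Set B)) ∈
          Filter.pi fun a : A => pure (f a) :=
        Filter.pi_mem_pi (Set.toFinite _) fun a _ => rfl
      exact Filter.mem_of_superset this fun x hx a ha => hx a ha
    obtain ⟨g, hg1, hg2⟩ := H _ hU
    exact ⟨g, hg2, hg1⟩
  · intro H t ht
    obtain ⟨u, hu, hsub⟩ := Filter.mem_comap.mp ht
    obtain ⟨I, tI, htI, hpi⟩ := Filter.mem_pi'.mp hu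
    obtain ⟨g, hgS, hg⟩ := H I
    refine ⟨g, hsub (hpi fun a ha => ?_), hgS⟩
    show g a ∈ tI a
    rw [hg a ha]
    exact htI a

-- pairing symmetry
lemma pairing_comm {Q : Type*} [AddCommGroup Q] [Module F Q]
    (β : Module.Dual F B) (ξ : Module.Dual F Q) (t : B ⊗[F] Q) :
    ξ ((TensorProduct.lid F Q) (LinearMap.rTensor Q β t)) =
      β ((TensorProduct.rid F B) (LinearMap.lTensor B ξ t)) := by
  induction t using TensorProduct.induction_on with
  | zero => simp
  | tmul b q => simp [mul_comm]
  | add x y hx hy => simp only [map_add, hx, hy]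

-- density of evaluations
set_option synthInstance.maxHeartbeats 1000000 in
lemma exists_eval_agree {P : Type*} [AddCommGroup P] [Module F P]
    (ξ : Module.Dual F (Module.Dual F P)) (s : Finset (Module.Dual F P)) :
    ∃ p : P, ∀ q ∈ s, ξ q = q p := by
  set W : Submodule F (Module.Dual F P) := Submodule.span F (s : Set (Module.Dual F P)) with hW
  haveI : FiniteDimensional F W := FiniteDimensional.span_finset F s
  haveI : Module.Free F W := Module.Free.of_divisionRing F W
  haveI : Module.IsReflexive F W := Module.IsReflexive.of_finite_of_free F W
  set e : P →ₗ[F] Module.Dual F W := W.subtype.dualMap ∘ₗ Module.Dual.eval F P with he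
  have hsurj : LinearMap.range e = ⊤ := by
    by_contra h
    obtain ⟨φ, hφ0, hφ⟩ := Submodule.exists_dual_map_eq_bot_of_lt_top
      (lt_top_iff_ne_top.mpr h) inferInstance
    obtain ⟨w, hw⟩ := (Module.evalEquiv F W).surjective φ
    apply hφ0
    have hwv : (w : Module.Dual F P) = 0 := by
      ext p
      have : φ (e p) = 0 := by
        have hm : φ (e p) ∈ Submodule.map φ (LinearMap.range e) :=
          ⟨e p, ⟨p, rfl⟩, rfl⟩
        rw [hφ] at hm
        simpa using hm
      rw [← hw] at this
      simpa [Module.evalEquiv_apply, Module.Dual.eval_apply, he] using this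
    rw [← hw]
    have : w = 0 := Subtype.ext hwv
    simp [this]
  obtain ⟨p, hp⟩ : ∃ p, e p = W.subtype.dualMap ξ := by
    have : W.subtype.dualMap ξ ∈ LinearMap.range e := hsurj ▸ Submodule.mem_top
    exact this
  refine ⟨p, fun q hq => ?_⟩
  have hqW : q ∈ W := Submodule.subset_span hq
  have := congrFun (congrArg (fun (f : Module.Dual F W) => (f : W → F)) hp) ⟨q, hqW⟩
  simpa [he, Module.Dual.eval_apply] using this.symm

lemma exists_dual_factor {M N : Type*} [AddCommGroup M] [Module F M]
    [AddCommGroup N] [Module F N] (μ : M →ₗ[F] N) (ν : M →ₗ[F] F)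
    (h : LinearMap.ker μ ≤ LinearMap.ker ν) :
    ∃ ξ : Module.Dual F N, ∀ t, ξ (μ t) = ν t := by
  have key : ∀ t t', μ t = μ t' → ν t = ν t' := by
    intro t t' htt
    have h1 : t - t' ∈ LinearMap.ker μ := by simp [LinearMap.mem_ker, htt]
    have h2 := h h1
    simp only [LinearMap.mem_ker, map_sub, sub_eq_zero] at h2
    exact h2
  choose c hc using fun w : LinearMap.range μ => LinearMap.mem_range.mp w.2
  set ξ₁ : LinearMap.range μ →ₗ[F] F :=
    { toFun := fun w => ν (c w)
      map_add' := by
        intro w1 w2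
        show ν (c (w1 + w2)) = ν (c w1) + ν (c w2)
        have : ν (c (w1 + w2)) = ν (c w1 + c w2) :=
          key _ _ (by rw [map_add, hc, hc, hc]; rfl)
        rw [this, map_add]
      map_smul' := by
        intro r w
        show ν (c (r • w)) = (RingHom.id F) r • ν (c w)
        have : ν (c (r • w)) = ν (r • c w) :=
          key _ _ (by rw [map_smul, hc, hc]; rfl)
        rw [this, map_smul]
        rfl } with hξ₁
  obtain ⟨ξ, hξ⟩ := LinearMap.exists_extend ξ₁
  refine ⟨ξ, fun t => ?_⟩
  have h2 : ξ (μ t) = ξ₁ ⟨μ t, LinearMap.mem_range_self μ t⟩ :=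
    (DFunLike.congr_fun hξ ⟨μ t, LinearMap.mem_range_self μ t⟩ :
      (ξ ∘ₗ (LinearMap.range μ).subtype) ⟨μ t, LinearMap.mem_range_self μ t⟩ =
        ξ₁ ⟨μ t, LinearMap.mem_range_self μ t⟩)
  rw [h2, hξ₁]
  exact key _ _ (hc ⟨μ t, LinearMap.mem_range_self μ t⟩)

/-- The bilinear map `β ↦ (a ↦ (β ⊗ id)(ρ a))`. -/
noncomputable def muL {Q : Type*} [AddCommGroup Q] [Module F Q] (ρ : A →ₗ[F] B ⊗[F] Q) :
    Module.Dual F B →ₗ[F] (A →ₗ[F] Q) where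
  toFun β := (TensorProduct.lid F Q).toLinearMap ∘ₗ LinearMap.rTensor Q β ∘ₗ ρ
  map_add' β₁ β₂ := by
    simp [LinearMap.rTensor_add, LinearMap.add_comp, LinearMap.comp_add]
  map_smul' c β := by
    simp [LinearMap.rTensor_smul, LinearMap.smul_comp, LinearMap.comp_smul]

lemma cosuppL_apply_of_rep {Q : Type*} [AddCommGroup Q] [Module F Q]
    (ρ : A →ₗ[F] B ⊗[F] Q) (χ : Module.Dual F Q) (a : A) (T : Finset (B × Q))
    (hT : ρ a = ∑ i ∈ T, i.1 ⊗ₜ[F] i.2) :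
    cosuppL ρ χ a = ∑ i ∈ T, χ i.2 • i.1 := by
  simp only [cosuppL, LinearMap.coe_mk, AddHom.coe_mk, LinearMap.coe_comp,
    LinearEquiv.coe_coe, Function.comp_apply, hT, map_sum, LinearMap.lTensor_tmul,
    TensorProduct.rid_tmul]


set_option maxHeartbeats 1000000 in
set_option synthInstance.maxHeartbeats 1000000 in
/-- Let `ρ : A → B ⊗ P^*` be a linear map and let `ψ : P ⊗ A → B` be given by
`ψ(p ⊗ a) = a_{(1)}(p) a_{(0)}`, i.e. `ψ(p ⊗ -) = (id_B ⊗ ev_p) ∘ ρ`.  Then the cosupport of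
`ρ` (the image of `P^{**}` under `q^{**} ↦ (id_B ⊗ q^{**}) ∘ ρ`) is the closure of the
cosupport `{ψ(p ⊗ -) | p ∈ P}` of `ψ` in the finite topology on `Hom_F(A,B)`. -/
theorem lcosupp_eq_closure_cosupp_psi {P : Type*} [AddCommGroup P] [Module F P]
    (ρ : A →ₗ[F] B ⊗[F] Module.Dual F P) :
    ((lcosupp ρ : Submodule F (A →ₗ[F] B)) : Set (A →ₗ[F] B)) =
      @closure _ (finiteTopology F A B)
        (Set.range fun p : P => cosuppL ρ (Module.Dual.eval F P p)) := by
  classical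
  ext f
  rw [SetLike.mem_coe, mem_closure_finiteTopology]
  constructor
  · rintro ⟨ξ, rfl⟩ s
    -- choose tensor representations
    have hrep : ∀ a : A, ∃ T : Finset (B × Module.Dual F P),
        ρ a = ∑ i ∈ T, i.1 ⊗ₜ[F] i.2 := fun a => TensorProduct.exists_finset (ρ a)
    choose T hT using hrep
    obtain ⟨p, hp⟩ := exists_eval_agree ξ (s.biUnion fun a => (T a).image Prod.snd)
    refine ⟨cosuppL ρ (Module.Dual.eval F P p), ⟨p, rfl⟩, fun a ha => ?_⟩
    rw [cosuppL_apply_of_rep ρ _ a (T a) (hT a), cosuppL_apply_of_rep ρ ξ a (T a) (hT a)]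
    refine Finset.sum_congr rfl fun i hi => ?_
    have : ξ i.2 = i.2 p := hp i.2 (Finset.mem_biUnion.mpr ⟨a, ha,
      Finset.mem_image.mpr ⟨i, hi, rfl⟩⟩)
    rw [Module.Dual.eval_apply, this]
  · intro h
    set μ : Module.Dual F B ⊗[F] A →ₗ[F] (Module.Dual F P) := TensorProduct.lift (muL ρ) with hμ
    set ν : Module.Dual F B ⊗[F] A →ₗ[F] F :=
      TensorProduct.lift ((LinearMap.llcomp F A B F).flip f) with hν
    have hμapp : ∀ (β : Module.Dual F B) (a : A),
        μ (β ⊗ₜ[F] a) = (TensorProduct.lid F (Module.Dual F P)) (LinearMap.rTensor (Module.Dual F P) β (ρ a)) := by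
      intro β a; simp [hμ, muL, TensorProduct.lift.tmul]
    have hνapp : ∀ (β : Module.Dual F B) (a : A), ν (β ⊗ₜ[F] a) = β (f a) := by
      intro β a; simp [hν, TensorProduct.lift.tmul]
    have hker : LinearMap.ker μ ≤ LinearMap.ker ν := by
      intro t ht
      obtain ⟨T, rfl⟩ := TensorProduct.exists_finset t
      obtain ⟨g, ⟨p, rfl⟩, hg⟩ := h (T.image Prod.snd)
      have hμt : (0 : (Module.Dual F P)) = ∑ i ∈ T, (TensorProduct.lid F (Module.Dual F P))
          (LinearMap.rTensor (Module.Dual F P) i.1 (ρ i.2)) := by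
        have h0 := LinearMap.mem_ker.mp ht
        rw [map_sum μ _ T] at h0
        simp only [hμapp] at h0
        exact h0.symm
      rw [LinearMap.mem_ker, map_sum]
      simp only [hνapp]
      have hfa : ∀ i ∈ T, f i.2 = cosuppL ρ (Module.Dual.eval F P p) i.2 := fun i hi =>
        (hg i.2 (Finset.mem_image.mpr ⟨i, hi, rfl⟩)).symm
      calc ∑ i ∈ T, i.1 (f i.2)
          = ∑ i ∈ T, Module.Dual.eval F P p
            ((TensorProduct.lid F (Module.Dual F P)) (LinearMap.rTensor (Module.Dual F P) i.1 (ρ i.2))) := by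
            refine Finset.sum_congr rfl fun i hi => ?_
            rw [hfa i hi]
            exact (pairing_comm i.1 (Module.Dual.eval F P p) (ρ i.2)).symm
        _ = Module.Dual.eval F P p (∑ i ∈ T, (TensorProduct.lid F (Module.Dual F P))
            (LinearMap.rTensor (Module.Dual F P) i.1 (ρ i.2))) := (map_sum (Module.Dual.eval F P p) _ T).symm
        _ = 0 := by rw [← hμt]; simp
    -- build ξ
    obtain ⟨ξ, hξμ⟩ := exists_dual_factor (F := F) (M := Module.Dual F B ⊗[F] A) (N := Module.Dual F P) μ ν hker
    refine ⟨ξ, ?_⟩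
    ext a
    have hsep : ∀ β : Module.Dual F B, β (cosuppL ρ ξ a) = β (f a) := by
      intro β
      have h3 : β ((TensorProduct.rid F B) (LinearMap.lTensor B ξ (ρ a))) =
          ξ ((TensorProduct.lid F (Module.Dual F P)) (LinearMap.rTensor (Module.Dual F P) β (ρ a))) :=
        (pairing_comm β ξ (ρ a)).symm
      have h4 : cosuppL ρ ξ a = (TensorProduct.rid F B) (LinearMap.lTensor B ξ (ρ a)) := rfl
      rw [h4, h3, ← hμapp, hξμ, hνapp]
    have := Module.forall_dual_apply_eq_zero_iff F (cosuppL ρ ξ a - f a)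
    rw [← sub_eq_zero]
    exact this.mp fun φ => by rw [map_sub, hsep, sub_self]
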